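/- Fix natural numbers e and t with t ≥ 1. Then, as n → ∞, the real sequence f(t; n) / (4^n · n^e) converges to 0, where f(t; n) = Σ_{i=0}^{n} (Σ_{m=0}^{e} P(m, i, n))^2 · P(i, t, n). -/

import Mathlib

open Finset Filter Topology

/-- Krawtchouk polynomial (alphabet size q = 4) evaluated at integer points:
`P(i, t, n) = Σ_{j=0}^{i} (-1)^j · 3^{i-j} · C(t, j) · C(n-t, i-j)`. -/
def K (i t n : ℕ) : ℤ :=
  ∑ j ∈ Finset.range (i + 1),
    (-1 : ℤ) ^ j * 3 ^ (i - j) * (t.choose j) * ((n - t).choose (i - j))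

/-- Li–Xing coefficient `f_{t;n} = (Σ_{m=0}^{e} P(m, t, n))²` for correction radius `e`. -/
def fCoeff (e t n : ℕ) : ℤ := (∑ m ∈ Finset.range (e + 1), K m t n) ^ 2

/-- Li–Xing function `f(t; n) = Σ_{i=0}^{n} f_{i;n} · P(i, t, n)`. -/
def fVal (e t n : ℕ) : ℤ :=
  ∑ i ∈ Finset.range (n + 1), fCoeff e i n * K i t n

section KrawtchoukAux
open Polynomial

abbrev F4 := ZMod 2 × ZMod 2
def bf (x y : F4) : ZMod 2 := x.1*y.2 + x.2*y.1
def chi (a : ZMod 2) : ℤ := if a = 0 then 1 else -1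
def w1 (a : F4) : ℕ := if a = 0 then 0 else 1

lemma chi_add : ∀ a b : ZMod 2, chi (a+b) = chi a * chi b := by decide
lemma sum_chi_ne (c : F4) : ∑ a ∈ univ.filter (· ≠ (0:F4)), chi (bf a c) = if c = 0 then 3 else -1 := by revert c; decide
lemma sum_chi_all (c : F4) : ∑ a : F4, chi (bf c a) = if c = 0 then 4 else 0 := by revert c; decide
lemma bf_zero_left (c : F4) : bf 0 c = 0 := by revert c; decide
lemma bf_comm : ∀ x y : F4, bf x y = bf y x := by decide
lemma bf_add_left : ∀ x y z : F4, bf (x+y) z = bf x z + bf y z := by decide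

variable {n : ℕ}

def eps (x y : Fin n → F4) : ℤ := ∏ k, chi (bf (x k) (y k))
def wt (x : Fin n → F4) : ℕ := #(univ.filter (fun k => x k ≠ 0))

lemma wt_le (x : Fin n → F4) : wt x ≤ n := by
  simpa [wt] using (card_filter_le univ (fun k => x k ≠ 0))

lemma wt_eq_sum (x : Fin n → F4) : wt x = ∑ k, w1 (x k) := by
  rw [wt, card_filter]; exact Finset.sum_congr rfl (fun k _ => by by_cases h : x k = 0 <;> simp [w1, h])

lemma coordSum (c : F4) : ∑ a : F4, ((X:ℤ[X])^(w1 a) * C (chi (bf a c)))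
    = if c = 0 then 1 + 3*X else 1 - X := by
  rw [← Finset.sum_filter_add_sum_filter_not univ (· = (0:F4))]
  have h1 : univ.filter (· = (0:F4)) = {0} := by decide
  have h2 : ∀ a ∈ univ.filter (· ≠ (0:F4)), (X:ℤ[X])^(w1 a) * C (chi (bf a c)) = X * C (chi (bf a c)) := by
    intro a ha; simp only [mem_filter] at ha; simp [w1, ha.2]
  rw [Finset.sum_congr rfl h2, ← Finset.mul_sum, ← map_sum, sum_chi_ne, h1]
  have hw : w1 (0 : F4) = 0 := rfl
  by_cases hc : c = 0 <;>
    simp [hc, bf_zero_left, chi, Polynomial.C_eq_intCast, hw] <;> ring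

lemma polyKey (y : Fin n → F4) :
    ∑ x : Fin n → F4, (X:ℤ[X])^(wt x) * C (eps x y)
      = (1 - X)^(wt y) * (1 + 3*X)^(n - wt y) := by
  have h1 : ∀ x : Fin n → F4, (X:ℤ[X])^(wt x) * C (eps x y)
      = ∏ k, ((X:ℤ[X])^(w1 (x k)) * C (chi (bf (x k) (y k)))) := by
    intro x
    simp only [eps, wt_eq_sum, map_prod, Finset.prod_mul_distrib, ← Finset.prod_pow_eq_pow_sum]
  calc ∑ x : Fin n → F4, (X:ℤ[X])^(wt x) * C (eps x y)
      = ∑ x ∈ Fintype.piFinset (fun _ : Fin n => (univ : Finset F4)),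
          ∏ k, ((X:ℤ[X])^(w1 (x k)) * C (chi (bf (x k) (y k)))) := by
        exact Finset.sum_congr Fintype.piFinset_univ.symm (fun x _ => h1 x)
    _ = ∏ k, ∑ a : F4, ((X:ℤ[X])^(w1 a) * C (chi (bf a (y k)))) :=
        (Finset.prod_univ_sum (fun _ : Fin n => (univ : Finset F4)) (fun k a => (X:ℤ[X])^(w1 a) * C (chi (bf a (y k))))).symm
    _ = ∏ k, (if y k = 0 then 1 + 3*(X:ℤ[X]) else 1 - X) :=
        Finset.prod_congr rfl (fun k _ => coordSum (y k))
    _ = (1 + 3*(X:ℤ[X]))^(#(univ.filter (fun k => y k = 0))) *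
          (1 - X)^(#(univ.filter (fun k => ¬ y k = 0))) := by
        rw [Finset.prod_ite, Finset.prod_const, Finset.prod_const]
    _ = (1 - X)^(wt y) * (1 + 3*X)^(n - wt y) := by
        have h := Finset.card_filter_add_card_filter_not (s := (univ : Finset (Fin n)))
          (p := fun k => y k = 0)
        simp only [Finset.card_univ, Fintype.card_fin] at h
        have hwt : #(univ.filter (fun k => ¬ y k = 0)) = wt y := rfl
        rw [hwt] at h ⊢
        rw [show #(univ.filter (fun k => y k = 0)) = n - wt y by omega, mul_comm]

lemma coeff_one_add_CX_pow (c : ℤ) (m l : ℕ) :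
    (((1:ℤ[X]) + C c * X)^m).coeff l = c^l * m.choose l := by
  rw [add_comm, add_pow]
  have h1 : ∀ k, ((C c * X)^k * (1:ℤ[X])^(m-k) * (m.choose k : ℤ[X]))
      = C ((c^k) * m.choose k) * X^k := by
    intro k
    have hc : ((m.choose k : ℤ[X])) = C ((m.choose k : ℤ)) := by
      simp
    rw [one_pow, mul_one, mul_pow, ← C_pow, hc, map_mul]
    ring
  rw [Finset.sum_congr rfl (fun k _ => h1 k), finset_sum_coeff]
  simp only [coeff_C_mul, coeff_X_pow]
  rw [Finset.sum_congr rfl (fun k (_ : k ∈ range (m+1)) =>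
    show (c^k * m.choose k) * (if l = k then (1:ℤ) else 0)
      = if k = l then (c^l * m.choose l) else 0 by
    by_cases h : l = k <;> simp [h, eq_comm] <;> tauto)]
  rw [Finset.sum_ite_eq' (range (m+1)) l (fun _ => c^l * (m.choose l : ℤ))]
  by_cases h : l ∈ range (m+1)
  · simp [h]
  · simp only [h, if_false]
    rw [mem_range] at h
    rw [Nat.choose_eq_zero_of_lt (by omega)]
    simp

lemma sphere_sum (y : Fin n → F4) (i : ℕ) :
    ∑ x ∈ univ.filter (fun x => wt x = i), eps x y = K i (wt y) n := by
  have h := congrArg (fun p : ℤ[X] => p.coeff i) (polyKey y)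
  rw [finset_sum_coeff] at h
  have hL : ∀ x : Fin n → F4, ((X:ℤ[X])^(wt x) * C (eps x y)).coeff i
      = if wt x = i then eps x y else 0 := by
    intro x
    rw [mul_comm, coeff_C_mul, coeff_X_pow]
    by_cases hx : wt x = i <;> simp [hx, Ne.symm, eq_comm]
  rw [Finset.sum_congr rfl (fun x _ => hL x), ← Finset.sum_filter] at h
  rw [h]
  have e1 : ((1:ℤ[X]) - X) = 1 + C (-1) * X := by
    rw [map_neg, map_one]; ring
  have e2 : ((1:ℤ[X]) + 3 * X) = 1 + C 3 * X := by
    norm_num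
  rw [e1, e2, coeff_mul, Finset.Nat.sum_antidiagonal_eq_sum_range_succ_mk]
  unfold K
  refine Finset.sum_congr rfl (fun j _ => ?_)
  rw [coeff_one_add_CX_pow, coeff_one_add_CX_pow]
  ring

lemma sum_eps_all (w : Fin n → F4) :
    ∑ x : Fin n → F4, eps w x = if w = 0 then 4^n else 0 := by
  have h1 : ∑ x : Fin n → F4, eps w x
      = ∏ k, ∑ a : F4, chi (bf (w k) a) := by
    rw [Finset.prod_univ_sum (fun _ : Fin n => (univ : Finset F4))
      (fun k a => chi (bf (w k) a)), ← Fintype.piFinset_univ]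
    rfl
  rw [h1, Finset.prod_congr rfl (fun k _ => sum_chi_all (w k))]
  by_cases hw : w = 0
  · simp [hw]
  · have : ∃ k, w k ≠ 0 := by
      by_contra hc
      push_neg at hc
      exact hw (funext hc)
    obtain ⟨k, hk⟩ := this
    rw [if_neg hw]
    exact Finset.prod_eq_zero (mem_univ k) (by simp [hk])

lemma eps_comm (x y : Fin n → F4) : eps x y = eps y x :=
  Finset.prod_congr rfl (fun k _ => by rw [bf_comm])

lemma eps_mul (u v x : Fin n → F4) : eps u x * eps v x = eps (u+v) x := by
  unfold eps
  rw [← Finset.prod_mul_distrib]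
  exact Finset.prod_congr rfl (fun k _ => by rw [← chi_add, ← bf_add_left]; rfl)

def Ball (n e : ℕ) : Finset (Fin n → F4) := univ.filter (fun u => wt u ≤ e)

lemma ball_sum (e : ℕ) (x : Fin n → F4) :
    ∑ m ∈ Finset.range (e+1), K m (wt x) n = ∑ u ∈ Ball n e, eps u x := by
  have h := Finset.sum_fiberwise_of_maps_to (s := Ball n e) (t := Finset.range (e+1))
    (g := wt) (fun u hu => by simp only [Ball, mem_filter] at hu; exact mem_range.2 (by omega))
    (fun u => eps u x)
  rw [← h]
  refine Finset.sum_congr rfl (fun m hm => ?_)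
  rw [← sphere_sum x m]
  refine Finset.sum_congr ?_ (fun _ _ => rfl)
  ext u
  simp only [Ball, mem_filter, mem_univ, true_and, filter_filter]
  rw [mem_range] at hm
  omega

lemma fVal_eq_card (e : ℕ) (z : Fin n → F4) :
    fVal e (wt z) n
      = 4^n * #((Ball n e).filter (fun u => wt (u + z) ≤ e)) := by
  have step1 : fVal e (wt z) n
      = ∑ x : Fin n → F4, fCoeff e (wt x) n * eps x z := by
    rw [← Finset.sum_fiberwise_of_maps_to (s := (univ : Finset (Fin n → F4)))
      (t := Finset.range (n+1)) (g := wt)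
      (fun x _ => mem_range.2 (by have := wt_le x; omega))
      (fun x => fCoeff e (wt x) n * eps x z)]
    unfold fVal
    refine Finset.sum_congr rfl (fun i _ => ?_)
    rw [← sphere_sum z i, Finset.mul_sum]
    exact Finset.sum_congr rfl (fun x hx => by
      simp only [mem_filter] at hx; rw [hx.2])
  rw [step1]
  have step2 : ∀ x : Fin n → F4, fCoeff e (wt x) n * eps x z
      = ∑ u ∈ Ball n e, ∑ v ∈ Ball n e, eps (u + v + z) x := by
    intro x
    rw [fCoeff, ball_sum, sq, Finset.sum_mul_sum]
    rw [Finset.sum_mul]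
    refine Finset.sum_congr rfl (fun u _ => ?_)
    rw [Finset.sum_mul]
    refine Finset.sum_congr rfl (fun v _ => ?_)
    rw [eps_mul, eps_comm x z, eps_mul]
  rw [Finset.sum_congr rfl (fun x _ => step2 x), Finset.sum_comm]
  have step3 : ∀ u ∈ Ball n e, ∑ x : Fin n → F4, ∑ v ∈ Ball n e, eps (u+v+z) x
      = if wt (u + z) ≤ e then 4^n else 0 := by
    intro u _
    rw [Finset.sum_comm]
    have h1 : ∀ v : Fin n → F4, ∑ x : Fin n → F4, eps (u+v+z) x
        = if v = u + z then 4^n else 0 := by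
      intro v
      rw [sum_eps_all]
      congr 1
      simp only [eq_iff_iff]
      constructor
      · intro h
        have : v + (u + v + z) = v + 0 := by rw [h]
        funext k
        have hk := congrFun this k
        simp only [Pi.add_apply, Pi.zero_apply, add_zero] at hk ⊢
        have h2 : v k + v k = 0 := by
          have : ∀ a : F4, a + a = 0 := by decide
          exact this _
        rw [show v k + (u k + v k + z k) = (v k + v k) + (u k + z k) by ring] at hk
        rw [h2, zero_add] at hk
        exact hk.symm
      · intro h
        funext k
        have hk := congrFun h k
        simp only [Pi.add_apply, Pi.zero_apply] at hk ⊢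
        rw [hk]
        have : ∀ a b : F4, a + (a + b) + b = 0 := by decide
        exact this _ _
    rw [Finset.sum_congr rfl (fun v _ => h1 v), Finset.sum_ite_eq' (Ball n e) (u+z)]
    simp [Ball]
  rw [Finset.sum_congr rfl step3, Finset.sum_ite, Finset.sum_const, Finset.sum_const_zero,
    add_zero, nsmul_eq_mul]
  ring

lemma sphere_card (i : ℕ) :
    (#(univ.filter (fun x : Fin n → F4 => wt x = i)) : ℤ) = 3^i * n.choose i := by
  have h0 : wt (0 : Fin n → F4) = 0 := by
    simp [wt]
  have h := sphere_sum (0 : Fin n → F4) i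
  rw [h0] at h
  have he : ∀ x : Fin n → F4, eps x 0 = 1 := by
    intro x
    unfold eps
    have : ∀ a : F4, chi (bf a 0) = 1 := by decide
    simp [this]
  rw [Finset.sum_congr rfl (fun x _ => he x)] at h
  simp only [Finset.sum_const, nsmul_eq_mul, mul_one] at h
  rw [h]
  unfold K
  rw [Finset.sum_eq_single 0 (fun j _ hj => by
    rw [Nat.choose_eq_zero_of_lt (by omega : (0:ℕ) < j)]
    simp) (fun h => by simp at h)]
  simp

lemma sphere_card_nat (i : ℕ) :
    #(univ.filter (fun x : Fin n → F4 => wt x = i)) = 3^i * n.choose i := by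
  have := sphere_card (n := n) i
  exact_mod_cast this

lemma ball_card_le (m : ℕ) (hn : 1 ≤ n) :
    #(Ball n m) ≤ (m+1) * (3^m * n^m) := by
  rw [Finset.card_eq_sum_card_fiberwise (f := wt) (t := Finset.range (m+1))
    (fun u hu => by simp only [Ball, Finset.mem_coe, mem_filter] at hu; exact mem_range.2 (by omega))]
  calc ∑ i ∈ Finset.range (m+1), #((Ball n m).filter (fun u => wt u = i))
      ≤ ∑ i ∈ Finset.range (m+1), (3^m * n^m) := by
        refine Finset.sum_le_sum (fun i hi => ?_)
        rw [mem_range] at hi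
        calc #((Ball n m).filter (fun u => wt u = i))
            ≤ #(univ.filter (fun u : Fin n → F4 => wt u = i)) := by
              refine Finset.card_le_card (fun u hu => ?_)
              simp only [Ball, filter_filter, mem_filter] at hu ⊢
              exact ⟨mem_univ u, hu.2.2⟩
          _ = 3^i * n.choose i := sphere_card_nat i
          _ ≤ 3^m * n^i := by
              exact Nat.mul_le_mul (Nat.pow_le_pow_right (by norm_num) (by omega))
                (Nat.choose_le_pow n i)
          _ ≤ 3^m * n^m := Nat.mul_le_mul_left _ (Nat.pow_le_pow_right hn (by omega))
    _ = (m+1) * (3^m * n^m) := by rw [Finset.sum_const, card_range, smul_eq_mul]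

lemma mem_key (e : ℕ) (z u : Fin n → F4) (ht : 1 ≤ wt z) (h1 : wt u ≤ e)
    (h2 : wt (u+z) ≤ e) :
    #(univ.filter (fun k => u k ≠ 0 ∧ ¬ z k ≠ 0)) + 1 ≤ e := by
  have h_ab := Finset.card_filter_add_card_filter_not
    (s := univ.filter (fun k => u k ≠ 0)) (p := fun k => z k ≠ 0)
  rw [filter_filter, filter_filter] at h_ab
  have h_cd := Finset.card_filter_add_card_filter_not
    (s := univ.filter (fun k => z k ≠ 0)) (p := fun k => u k = z k)
  rw [filter_filter, filter_filter] at h_cd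
  have h_da : #(univ.filter (fun k => z k ≠ 0 ∧ u k = z k))
      ≤ #(univ.filter (fun k => u k ≠ 0 ∧ z k ≠ 0)) := by
    refine Finset.card_le_card (fun k hk => ?_)
    simp only [mem_filter, mem_univ, true_and] at hk ⊢
    exact ⟨hk.2 ▸ hk.1, hk.1⟩
  have hne : ∀ a b : F4, a ≠ b → a + b ≠ 0 := by decide
  have hsub1 : univ.filter (fun k => u k ≠ 0 ∧ ¬ z k ≠ 0)
      ⊆ univ.filter (fun k => (u+z) k ≠ 0) := by
    intro k hk
    simp only [mem_filter, mem_univ, true_and, not_not, Pi.add_apply] at hk ⊢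
    rw [hk.2, add_zero]
    exact hk.1
  have hsub2 : univ.filter (fun k => z k ≠ 0 ∧ ¬ u k = z k)
      ⊆ univ.filter (fun k => (u+z) k ≠ 0) := by
    intro k hk
    simp only [mem_filter, mem_univ, true_and, Pi.add_apply] at hk ⊢
    exact hne _ _ hk.2
  have hdisj : Disjoint (univ.filter (fun k => u k ≠ 0 ∧ ¬ z k ≠ 0))
      (univ.filter (fun k => z k ≠ 0 ∧ ¬ u k = z k)) := by
    refine Finset.disjoint_filter_filter' _ _ ?_
    intro p hp1 hp2 k hk
    exact absurd (hp2 k hk).1 (hp1 k hk).2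
  have h_bc : #(univ.filter (fun k => u k ≠ 0 ∧ ¬ z k ≠ 0))
      + #(univ.filter (fun k => z k ≠ 0 ∧ ¬ u k = z k)) ≤ wt (u+z) := by
    rw [← Finset.card_union_of_disjoint hdisj]
    exact Finset.card_le_card (Finset.union_subset hsub1 hsub2)
  have hwtu : wt u = #(univ.filter (fun k => u k ≠ 0)) := rfl
  have hwtz : wt z = #(univ.filter (fun k => z k ≠ 0)) := rfl
  omega

lemma M_le (e : ℕ) (z : Fin n → F4) (ht : 1 ≤ wt z) :
    #((Ball n e).filter (fun u => wt (u + z) ≤ e)) ≤ 4^(wt z) * #(Ball n (e-1)) := by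
  classical
  set A := Fintype.piFinset (fun k =>
    if z k ≠ 0 then (univ : Finset F4) else ({0} : Finset F4)) with hA
  have hcard : #((Ball n e).filter (fun u => wt (u + z) ≤ e)) ≤ #(A ×ˢ Ball n (e-1)) := by
    refine Finset.card_le_card_of_injOn
      (fun u => (fun k => if z k ≠ 0 then u k else 0,
                 fun k => if z k ≠ 0 then 0 else u k)) ?_ ?_
    · intro u hu
      simp only [Ball, filter_filter, Finset.mem_coe, mem_filter, mem_univ, true_and] at hu
      rw [Finset.mem_coe, Finset.mem_product]
      constructor
      · rw [hA, Fintype.mem_piFinset]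
        intro k
        by_cases hk : z k ≠ 0 <;> simp [hk]
      · simp only [Ball, mem_filter, mem_univ, true_and]
        have hwt : wt (fun k => if z k ≠ 0 then 0 else u k)
            = #(univ.filter (fun k => u k ≠ 0 ∧ ¬ z k ≠ 0)) := by
          unfold wt
          congr 1
          ext k
          by_cases hk : z k ≠ 0 <;> simp [hk] <;> tauto
        rw [hwt]
        have := mem_key e z u ht hu.1 hu.2
        omega
    · intro u hu v hv huv
      simp only [Prod.mk.injEq] at huv
      funext k
      by_cases hk : z k ≠ 0
      · have := congrFun huv.1 k; simpa [hk] using this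
      · have := congrFun huv.2 k; simpa [hk] using this
  have hAcard : #A = 4^(wt z) := by
    rw [hA, Fintype.card_piFinset]
    have h4 : ∀ k, #(if z k ≠ 0 then (univ : Finset F4) else ({0}:Finset F4))
        = if z k ≠ 0 then 4 else 1 := by
      intro k
      by_cases hk : z k ≠ 0
      · rw [if_pos hk, if_pos hk]; decide
      · rw [if_neg hk, if_neg hk]; exact Finset.card_singleton _
    rw [Finset.prod_congr rfl (fun k _ => h4 k), Finset.prod_ite, Finset.prod_const,
      Finset.prod_const, one_pow, mul_one]
    rfl
  calc #((Ball n e).filter (fun u => wt (u + z) ≤ e)) ≤ #(A ×ˢ Ball n (e-1)) := hcard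
    _ = #A * #(Ball n (e-1)) := Finset.card_product _ _
    _ = 4^(wt z) * #(Ball n (e-1)) := by rw [hAcard]

lemma count_bound (e : ℕ) (z : Fin n → F4) (ht : 1 ≤ wt z) (hn : 1 ≤ n) :
    #((Ball n e).filter (fun u => wt (u + z) ≤ e)) * n
      ≤ 4^(wt z) * (e+1) * 3^e * n^e := by
  set M := #((Ball n e).filter (fun u => wt (u + z) ≤ e)) with hM
  rcases Nat.eq_zero_or_pos M with h0 | hpos
  · rw [h0, zero_mul]; exact Nat.zero_le _
  · obtain ⟨u, hu⟩ := Finset.card_pos.1 hpos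
    simp only [Ball, filter_filter, mem_filter, mem_univ, true_and] at hu
    have he : 1 ≤ e := by
      have := mem_key e z u ht hu.1 hu.2
      omega
    have h1 : #(Ball n (e-1)) ≤ e * (3^(e-1) * n^(e-1)) := by
      have := ball_card_le (n := n) (e-1) hn
      rwa [Nat.sub_add_cancel he] at this
    have hn' : n^(e-1) * n = n^e := by
      rw [← pow_succ, Nat.sub_add_cancel he]
    calc M * n ≤ (4^(wt z) * (e * (3^(e-1) * n^(e-1)))) * n :=
          Nat.mul_le_mul_right n (le_trans (M_le e z ht) (Nat.mul_le_mul_left _ h1))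
      _ = 4^(wt z) * e * 3^(e-1) * (n^(e-1) * n) := by ring
      _ = 4^(wt z) * e * 3^(e-1) * n^e := by rw [hn']
      _ ≤ 4^(wt z) * (e+1) * 3^e * n^e := by
          refine Nat.mul_le_mul_right _ ?_
          exact Nat.mul_le_mul (Nat.mul_le_mul_left _ (by omega))
            (Nat.pow_le_pow_right (by norm_num) (by omega))

lemma exists_z (t : ℕ) (htn : t ≤ n) : ∃ z : Fin n → F4, wt z = t := by
  refine ⟨fun k => if (k:ℕ) < t then ((1:ZMod 2),(0:ZMod 2)) else 0, ?_⟩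
  unfold wt
  have hfe : (univ.filter (fun k : Fin n =>
      (if (k:ℕ) < t then ((1:ZMod 2),(0:ZMod 2)) else 0) ≠ 0))
      = (Finset.range t).attachFin (fun m hm => lt_of_lt_of_le (mem_range.1 hm) htn) := by
    ext k
    rw [Finset.mem_attachFin, mem_range, mem_filter]
    by_cases hk : (k:ℕ) < t
    · simp only [hk, if_true, iff_true_intro hk, mem_univ, true_and, iff_true]
      decide
    · simp [hk]
  rw [hfe, Finset.card_attachFin, Finset.card_range]

theorem fVal_pos_t_asymptotics (e t : ℕ) (ht : 1 ≤ t) :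
    Filter.Tendsto (fun n : ℕ => (fVal e t n : ℝ) / ((4 : ℝ) ^ n * (n : ℝ) ^ e))
      Filter.atTop (nhds 0) := by
  have hC : Tendsto (fun n : ℕ => ((4^t * (e+1) * 3^e : ℕ) : ℝ) / n) atTop (nhds 0) :=
    tendsto_const_div_atTop_nhds_zero_nat _
  refine squeeze_zero_norm' ?_ hC
  filter_upwards [eventually_ge_atTop (max t 1)] with n hn
  have htn : t ≤ n := le_trans (le_max_left _ _) hn
  have hn1 : 1 ≤ n := le_trans (le_max_right _ _) hn
  obtain ⟨z, hz⟩ := exists_z (n := n) t htn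
  set M := #((Ball n e).filter (fun u => wt (u + z) ≤ e)) with hM
  have hfv : fVal e t n = 4^n * (M:ℤ) := by
    rw [← hz]
    exact_mod_cast fVal_eq_card e z
  have hcount : M * n ≤ 4^t*(e+1)*3^e * n^e := by
    have := count_bound e z (by rw [hz]; exact ht) hn1
    rwa [hz] at this
  have h4pos : (0:ℝ) < 4^n := by positivity
  have hnpos : (0:ℝ) < (n:ℝ) := by exact_mod_cast hn1
  have hnepos : (0:ℝ) < (n:ℝ)^e := by positivity
  have hval : (fVal e t n : ℝ) = 4^n * M := by rw [hfv]; push_cast; ring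
  have hquot : (fVal e t n : ℝ) / ((4:ℝ)^n * (n:ℝ)^e) = (M:ℝ) / (n:ℝ)^e := by
    rw [hval, mul_div_mul_left _ _ (ne_of_gt h4pos)]
  rw [hquot, Real.norm_of_nonneg (by positivity)]
  rw [div_le_div_iff₀ hnepos hnpos]
  exact_mod_cast hcount
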